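/- Let A, B be commutative ℚ-algebras, φ : B → A a ring homomorphism, X a derivation of A, Y a derivation of B. Then X ∘ φ = φ ∘ Y (i.e. X and Y are φ-related) if and only if exp(τX) ∘ φ = φ̂ ∘ exp(τY) as maps B → A⟦τ⟧, where φ̂ : B⟦τ⟧ → A⟦τ⟧ is φ applied coefficientwise. -/

import Mathlib

/-- The formal flow `exp(τX)(f) = Σ_{ℓ≥0} (1/ℓ!) X^ℓ(f) τ^ℓ ∈ A⟦τ⟧`. -/
noncomputable def expFlow {A : Type*} [CommRing A] [Algebra ℚ A]
    (X : Derivation ℚ A A) (f : A) : PowerSeries A :=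
  PowerSeries.mk fun ℓ => (ℓ.factorial : ℚ)⁻¹ • (⇑X)^[ℓ] f

/-- For commutative ℚ-algebras `A, B`, a ring homomorphism `φ : B → A`, and derivations
`X` of `A` and `Y` of `B`: `X` and `Y` are `φ`-related (`X ∘ φ = φ ∘ Y`) iff
`exp(τX) ∘ φ = φ̂ ∘ exp(τY)`, where `φ̂` is `φ` applied coefficientwise. -/
theorem related_iff_flows_intertwined {A B : Type*} [CommRing A] [CommRing B]
    [Algebra ℚ A] [Algebra ℚ B] (φ : B →+* A)
    (X : Derivation ℚ A A) (Y : Derivation ℚ B B) :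
    (∀ b : B, X (φ b) = φ (Y b)) ↔
    (∀ b : B, expFlow X (φ b) = PowerSeries.map φ (expFlow Y b)) := by
  constructor
  · intro h b
    have key : ∀ ℓ : ℕ, (⇑X)^[ℓ] (φ b) = φ ((⇑Y)^[ℓ] b) := by
      intro ℓ
      induction ℓ generalizing b with
      | zero => simp
      | succ n ih =>
        rw [Function.iterate_succ_apply, Function.iterate_succ_apply, h, ih]
    ext ℓ
    simp only [expFlow, PowerSeries.coeff_mk, PowerSeries.coeff_map, key,
      map_rat_smul]
  · intro h b
    have := congrArg (PowerSeries.coeff (R := A) 1) (h b)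
    simpa [expFlow] using this
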